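/- Let δ ∈ ℂ with δ ≠ 0, and let L be a complex vector space equipped with a commutative associative bilinear multiplication · and a Lie bracket [-,-]. Then (L, ·, [-,-]) is simultaneously a δ-Poisson algebra and a transposed δ-Poisson algebra if and only if x·[y,z] = 0 and [x·y, z] = 0 for all x, y, z ∈ L. -/
import Mathlib


/-- A Lie bracket (bilinear, alternating, satisfying the Jacobi identity)
on a complex vector space. -/
structure LieBracketOn (L : Type*) [AddCommGroup L] [Module ℂ L] where
  br : L → L → L
  add_left : ∀ x y z, br (x + y) z = br x z + br y z
  smul_left : ∀ (c : ℂ) (x y : L), br (c • x) y = c • br x y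
  add_right : ∀ x y z, br x (y + z) = br x y + br x z
  smul_right : ∀ (c : ℂ) (x y : L), br x (c • y) = c • br x y
  alt : ∀ x, br x x = 0
  jacobi : ∀ x y z, br (br x y) z + br (br y z) x + br (br z x) y = 0

/-- for `δ ≠ 0`, a commutative associative product and a Lie
bracket form simultaneously a `δ`-Poisson and a transposed `δ`-Poisson algebra
iff `x·[y,z] = 0` and `[x·y, z] = 0` for all `x, y, z`. -/
theorem stmt_0 {L : Type*} [AddCommGroup L] [Module ℂ L]
    (mul : L → L → L)
    (mul_add_left : ∀ x y z, mul (x + y) z = mul x z + mul y z)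
    (mul_smul_left : ∀ (c : ℂ) (x y : L), mul (c • x) y = c • mul x y)
    (mul_add_right : ∀ x y z, mul x (y + z) = mul x y + mul x z)
    (mul_smul_right : ∀ (c : ℂ) (x y : L), mul x (c • y) = c • mul x y)
    (mul_comm : ∀ x y, mul x y = mul y x)
    (mul_assoc : ∀ x y z, mul (mul x y) z = mul x (mul y z))
    (B : LieBracketOn L) (δ : ℂ) (hδ : δ ≠ 0) :
    ((∀ x y z, B.br x (mul y z) = δ • (mul (B.br x y) z + mul y (B.br x z))) ∧
      (∀ x y z, δ • mul z (B.br x y) = B.br (mul z x) y + B.br x (mul z y)))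
      ↔ (∀ x y z, mul x (B.br y z) = 0 ∧ B.br (mul x y) z = 0) := by
  have skew : ∀ x y, B.br x y = - B.br y x := by
    intro x y
    have h := B.alt (x + y)
    rw [B.add_left, B.add_right, B.add_right, B.alt, B.alt] at h
    have h2 : B.br x y + B.br y x = 0 := by rw [← h]; abel
    exact eq_neg_of_add_eq_zero_left h2
  have mneg : ∀ x y, mul x (-y) = - mul x y := by
    intro x y
    rw [← neg_one_smul ℂ y, mul_smul_right, neg_one_smul]
  constructor
  · rintro ⟨hP, hT⟩
    -- the key auxiliary identity x·[y,z] = y·[x,z] + z·[x,y]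
    have hstar : ∀ x y z, mul x (B.br y z) = mul y (B.br x z) + mul z (B.br x y) := by
      intro x y z
      have h1 := hT x y z
      rw [hP x z y, skew (mul z x) y, hP y z x, skew y x, mneg] at h1
      have h3 : δ • mul (B.br y z) x = δ • (mul (B.br x z) y + mul z (B.br x y)) := by
        linear_combination (norm := module) h1
      have h4 := smul_right_injective L hδ h3
      rw [mul_comm (B.br y z) x, mul_comm (B.br x z) y] at h4
      exact h4
    have hA : ∀ x y z, B.br x (mul y z) = δ • mul x (B.br y z) := by
      intro x y z
      rw [hP x y z, hstar x y z]
      congr 1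
      rw [mul_comm (B.br x y) z]
      abel
    have hB : ∀ x y z, B.br (mul x y) z = -(δ • mul z (B.br x y)) := by
      intro x y z
      rw [skew (mul x y) z, hA z x y]
    have hfin : ∀ x y z, mul z (B.br x y) = 0 := by
      intro x y z
      have h1 := hT x y z
      rw [hB z x y, hA x z y, skew z x, mneg, skew z y, mneg] at h1
      have h2 : (2 * δ) • mul z (B.br x y) = 0 := by
        linear_combination (norm := module) h1 - δ • hstar x y z
      rcases smul_eq_zero.1 h2 with h | h
      · exact absurd h (by simpa using hδ)
      · exact h
    intro x y z
    refine ⟨hfin y z x, ?_⟩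
    rw [hB x y z, hfin x y z, smul_zero, neg_zero]
  · intro h
    constructor
    · intro x y z
      have h1 : B.br x (mul y z) = 0 := by
        rw [skew x (mul y z), (h y z x).2, neg_zero]
      have h2 : mul (B.br x y) z = 0 := by
        rw [mul_comm, (h z x y).1]
      rw [h1, h2, (h y x z).1, add_zero, smul_zero]
    · intro x y z
      rw [(h z x y).1, smul_zero, (h z x y).2]
      have h1 : B.br x (mul z y) = 0 := by
        rw [skew x (mul z y), (h z y x).2, neg_zero]
      rw [h1, add_zero]
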